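/- For d ≥ 1 and 2 ≤ k ≤ 2^{d+1}, there exists a lower set S ⊆ ℕ₀^d with |S| ≤ k such that ∑_{i∈S} 2^{‖i‖₀} ≥ k^{log 3/log 2}/3. -/

import Mathlib

def IsLowerMultiSet {d : ℕ} (S : Set (Fin d → ℕ)) : Prop :=
  ∀ i ∈ S, ∀ i' : Fin d → ℕ, (∀ j, i' j ≤ i j) → i' ∈ S

/-- For `d ≥ 1` and `2 ≤ k ≤ 2^{d+1}`, there exists a lower set `S ⊆ ℕ₀^d`
with `|S| ≤ k` such that `∑_{i∈S} 2^{‖i‖₀} ≥ k^{log 3/log 2}/3`. -/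
theorem chebyshev_weighted_card_lower_bound (d k : ℕ) (hd : 1 ≤ d)
    (hk : 2 ≤ k) (hk2 : k ≤ 2 ^ (d + 1)) :
    ∃ S : Finset (Fin d → ℕ), IsLowerMultiSet (↑S : Set (Fin d → ℕ)) ∧
      S.card ≤ k ∧
      (k : ℝ) ^ (Real.log 3 / Real.log 2) / 3
        ≤ ∑ i ∈ S, (2 : ℝ) ^ (Finset.univ.filter fun j => i j ≠ 0).card := by
  set n := Nat.clog 2 k with hn
  have hn1 : 1 ≤ n := Nat.clog_pos (by norm_num) hk
  set m := n - 1 with hmdef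
  have hmn : m + 1 = n := by omega
  have hnd : n ≤ d + 1 := by
    calc n ≤ Nat.clog 2 (2 ^ (d + 1)) := Nat.clog_mono_right 2 hk2
    _ = d + 1 := Nat.clog_pow 2 (d + 1) (by norm_num)
  have hmd : m ≤ d := by omega
  refine ⟨Fintype.piFinset (fun j : Fin d => Finset.range (if (j : ℕ) < m then 2 else 1)),
    ?_, ?_, ?_⟩
  · intro i hi i' hle
    rw [Finset.mem_coe, Fintype.mem_piFinset] at hi ⊢
    intro j
    simp only [Finset.mem_range] at hi ⊢
    exact lt_of_le_of_lt (hle j) (hi j)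
  · have hcardfilter : (Finset.univ.filter (fun j : Fin d => (j : ℕ) < m)).card = m := by
      have := Finset.card_bij (s := Finset.univ.filter (fun j : Fin d => (j : ℕ) < m))
        (t := Finset.range m) (fun j _ => (j : ℕ))
        (by intro a ha; simp at ha ⊢; omega)
        (by intro a ha b hb hab; exact Fin.ext hab)
        (by intro b hb; simp at hb; exact ⟨⟨b, by omega⟩, by simpa, rfl⟩)
      simpa using this
    rw [Fintype.card_piFinset]
    have : ∏ j : Fin d, (Finset.range (if (j : ℕ) < m then 2 else 1)).card
        = ∏ j : Fin d, (if (j : ℕ) < m then 2 else 1) := by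
      simp [Finset.card_range]
    rw [this, Finset.prod_ite, Finset.prod_const, Finset.prod_const, one_pow, mul_one,
      hcardfilter]
    have h2m : 2 ^ m < k := by
      have := Nat.pow_pred_clog_lt_self (b := 2) (by norm_num) (x := k) hk
      simpa [hmdef, Nat.pred_eq_sub_one] using this
    exact le_of_lt h2m
  · -- compute the sum
    have hcardfilter : (Finset.univ.filter (fun j : Fin d => (j : ℕ) < m)).card = m := by
      have := Finset.card_bij (s := Finset.univ.filter (fun j : Fin d => (j : ℕ) < m))
        (t := Finset.range m) (fun j _ => (j : ℕ))
        (by intro a ha; simp at ha ⊢; omega)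
        (by intro a ha b hb hab; exact Fin.ext hab)
        (by intro b hb; simp at hb; exact ⟨⟨b, by omega⟩, by simpa, rfl⟩)
      simpa using this
    have hsum : ∑ i ∈ Fintype.piFinset
          (fun j : Fin d => Finset.range (if (j : ℕ) < m then 2 else 1)),
        (2 : ℝ) ^ (Finset.univ.filter fun j => i j ≠ 0).card = 3 ^ m := by
      have hterm : ∀ i : Fin d → ℕ,
          (2 : ℝ) ^ (Finset.univ.filter fun j => i j ≠ 0).card
            = ∏ j : Fin d, (if i j ≠ 0 then (2 : ℝ) else 1) := by
        intro i
        rw [Finset.prod_ite, Finset.prod_const, Finset.prod_const, one_pow, mul_one]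
      simp_rw [hterm]
      rw [← Finset.prod_univ_sum (fun j : Fin d => Finset.range (if (j : ℕ) < m then 2 else 1))
        (fun _ x => if x ≠ 0 then (2 : ℝ) else 1)]
      have hfac : ∀ j : Fin d,
          (∑ x ∈ Finset.range (if (j : ℕ) < m then 2 else 1),
            (if x ≠ 0 then (2 : ℝ) else 1)) = (if (j : ℕ) < m then 3 else 1) := by
        intro j
        by_cases hj : (j : ℕ) < m <;> simp [hj, Finset.sum_range_succ] <;> norm_num
      simp_rw [hfac]
      rw [Finset.prod_ite, Finset.prod_const, Finset.prod_const, one_pow, mul_one,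
        hcardfilter]
    rw [hsum]
    -- real inequality: k^c / 3 ≤ 3^m
    set c : ℝ := Real.log 3 / Real.log 2 with hc
    have hlog2 : Real.log 2 ≠ 0 := by
      have := Real.log_pos (by norm_num : (1:ℝ) < 2); linarith
    have h2c : (2 : ℝ) ^ c = 3 := by
      rw [Real.rpow_def_of_pos (by norm_num)]
      rw [show Real.log 2 * c = Real.log 3 by rw [hc]; field_simp]
      exact Real.exp_log (by norm_num)
    have hkn : (k : ℝ) ≤ (2 : ℝ) ^ n := by
      have := Nat.le_pow_clog (b := 2) (by norm_num) k
      exact_mod_cast this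
    have hc0 : 0 ≤ c := by
      apply div_nonneg (Real.log_nonneg (by norm_num)) (Real.log_nonneg (by norm_num))
    have hkc : (k : ℝ) ^ c ≤ ((2 : ℝ) ^ n) ^ c :=
      Real.rpow_le_rpow (by positivity) hkn hc0
    have h2nc : ((2 : ℝ) ^ n) ^ c = 3 ^ n := by
      rw [← Real.rpow_natCast (2 : ℝ) n, ← Real.rpow_mul (by norm_num), mul_comm,
        Real.rpow_mul (by norm_num), h2c, Real.rpow_natCast]
    rw [h2nc] at hkc
    have : (3 : ℝ) ^ n = 3 * 3 ^ m := by
      rw [← hmn, pow_succ, mul_comm]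
    rw [this] at hkc
    rw [div_le_iff₀ (by norm_num : (0:ℝ) < 3)]
    linarith
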